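/- The five-qubit three-uniform hypergraph state |H₅⟩ = C_{{1,2,4}}C_{{1,2,5}}C_{{1,3,4}}C_{{1,3,5}}C_{{2,3,4}}C_{{2,3,5}}|+⟩^{⊗5} satisfies the exact expansion |H₅⟩ = (1/(2√2)) [ (|000⟩+|001⟩+|010⟩+|100⟩)_{123} ⊗ |+⟩_4|+⟩_5 + (|011⟩+|110⟩+|101⟩+|111⟩)_{123} ⊗ |−⟩_4|−⟩_5 ]. -/

import Mathlib

noncomputable section

/-- The state space of qubits labeled by `ι`: a vector is the family of its
amplitudes in the computational basis `{|x⟩ : x : ι → Bool}`. -/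
abbrev QState (ι : Type) := (ι → Bool) → ℂ

/-- The sign `(−1)^{∏_{i∈e} x_i}` of the generalized controlled-Z gate `C_e`
on the basis vector `|x⟩`. -/
def csign {ι : Type} (e : Finset ι) (x : ι → Bool) : ℂ :=
  if ∀ i ∈ e, x i = true then -1 else 1

/-- The generalized controlled-Z gate `C_e`, the diagonal unitary with
`C_e |x⟩ = (−1)^{∏_{i∈e} x_i} |x⟩`. -/
def Cgate {ι : Type} (e : Finset ι) (ψ : QState ι) : QState ι :=
  fun x => csign e x * ψ x

/-- The Hadamard gate `H_i` on qubit `i`, acting as the identity on all other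
qubits. -/
def Hgate {ι : Type} [DecidableEq ι] (i : ι) (ψ : QState ι) : QState ι :=
  fun x => (((Real.sqrt 2)⁻¹ : ℝ) : ℂ) *
    (ψ (Function.update x i false) +
      (if x i = true then -1 else 1) * ψ (Function.update x i true))

/-- The Pauli-X (bit flip) gate `X_i` on qubit `i`. -/
def Xgate {ι : Type} [DecidableEq ι] (i : ι) (ψ : QState ι) : QState ι :=
  fun x => ψ (Function.update x i (!(x i)))

/-- The generalized CNOT gate with control set `f` and target `t ∉ f`:
it flips bit `t` of `x` exactly when `∏_{j∈f} x_j = 1`. -/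
def CNOTgate {ι : Type} [DecidableEq ι] (f : Finset ι) (t : ι) (ψ : QState ι) : QState ι :=
  fun x => ψ (if ∀ j ∈ f, x j = true then Function.update x t (!(x t)) else x)

/-- `|+⟩^{⊗n}`, the uniform superposition `2^{−n/2} ∑_x |x⟩`. -/
def plusAll (ι : Type) [Fintype ι] : QState ι :=
  fun _ => (((Real.sqrt 2)⁻¹ : ℝ) : ℂ) ^ (Fintype.card ι)

/-- The computational-basis ket `|s⟩`. -/
def zketS {ι : Type} [Fintype ι] [DecidableEq ι] (s : ι → Bool) : QState ι :=
  fun x => if x = s then 1 else 0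

/-- The Pauli-X-basis product ket: qubit `i` is `|+⟩` if `s i = false` and
`|−⟩` if `s i = true`, where `|±⟩ = (|0⟩ ± |1⟩)/√2`. -/
def xketS {ι : Type} [Fintype ι] (s : ι → Bool) : QState ι :=
  fun x => ∏ i, ((((Real.sqrt 2)⁻¹ : ℝ) : ℂ) * (if s i && x i then -1 else 1))

/-- Tensor product of a state of the qubits `κ` with a state of the qubits `ι`. -/
def tensP {κ ι : Type} (φ : QState κ) (u : QState ι) : QState (κ ⊕ ι) :=
  fun x => φ (fun i => x (Sum.inl i)) * u (fun j => x (Sum.inr j))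

/-- The partial inner product `(⟨φ|_κ ⊗ I)`, sending a state of the qubits
`κ ⊕ ι` to a state of the remaining qubits `ι`. -/
def pinner {κ ι : Type} [Fintype κ] [DecidableEq κ] (φ : QState κ) (w : QState (κ ⊕ ι)) :
    QState ι :=
  fun y => ∑ b : κ → Bool, (starRingEnd ℂ) (φ b) * w (Sum.elim b y)

/-- Tensor product of a single-qubit state on qubit `i` with a state of the
remaining qubits. -/
def tensQ {ι : Type} [DecidableEq ι] (i : ι) (φ : Bool → ℂ) (ψ : QState {j : ι // j ≠ i}) :
    QState ι :=
  fun x => φ (x i) * ψ (fun j => x j.1)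

/-- The partial inner product over the single qubit `i`. -/
def pinner1 {ι : Type} [DecidableEq ι] (i : ι) (φ : Bool → ℂ) (w : QState ι) :
    QState {j : ι // j ≠ i} :=
  fun y => ∑ b : Bool, (starRingEnd ℂ) (φ b) * w (fun j => if h : j = i then b else y ⟨j, h⟩)

/-- The hypergraph state `∏_{e∈E} C_e |+⟩^{⊗|V|}` of the hypergraph `(V, E)`. -/
def hgState {ι : Type} [Fintype ι] (E : Finset (Finset ι)) : QState ι :=
  fun x => (∏ e ∈ E, csign e x) * plusAll ι x

/-- Sequential composition (operator product) of a list of operators. -/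
def seqComp {α : Type} (fs : List (α → α)) : α → α := fs.foldr (· ∘ ·) id
/-- The five-qubit three-uniform hypergraph state `|H₅⟩`, on qubits
`1,2,3 = Sum.inl 0,1,2` and `4,5 = Sum.inr 0,1`, with hyperedges
`{1,2,4},{1,2,5},{1,3,4},{1,3,5},{2,3,4},{2,3,5}`. -/
def H5 : QState (Fin 3 ⊕ Fin 2) :=
  Cgate {Sum.inl 0, Sum.inl 1, Sum.inr 0} (Cgate {Sum.inl 0, Sum.inl 1, Sum.inr 1}
    (Cgate {Sum.inl 0, Sum.inl 2, Sum.inr 0} (Cgate {Sum.inl 0, Sum.inl 2, Sum.inr 1}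
      (Cgate {Sum.inl 1, Sum.inl 2, Sum.inr 0} (Cgate {Sum.inl 1, Sum.inl 2, Sum.inr 1}
        (plusAll (Fin 3 ⊕ Fin 2)))))))
/-- `|H₅⟩ = (1/(2√2)) [ (|000⟩+|001⟩+|010⟩+|100⟩)_{123} ⊗ |+⟩₄|+⟩₅
  + (|011⟩+|110⟩+|101⟩+|111⟩)_{123} ⊗ |−⟩₄|−⟩₅ ]`. -/

lemma hs_aux : ((2 * Real.sqrt 2)⁻¹ : ℝ) = ((Real.sqrt 2)⁻¹) ^ 3 := by
  rw [inv_pow]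
  congr 1
  rw [show (Real.sqrt 2) ^ 3 = (Real.sqrt 2 * Real.sqrt 2) * Real.sqrt 2 from by ring,
    Real.mul_self_sqrt (by norm_num)]

lemma H5_aux : ∀ a b c d e : Bool,
    H5 (Sum.elim ![a, b, c] ![d, e]) = (((2 * Real.sqrt 2)⁻¹ : ℝ) : ℂ) • (
      tensP (zketS ![false, false, false] + zketS ![false, false, true]
          + zketS ![false, true, false] + zketS ![true, false, false])
        (xketS (![false, false] : Fin 2 → Bool))
      + tensP (zketS ![false, true, true] + zketS ![true, true, false]
          + zketS ![true, false, true] + zketS ![true, true, true])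
        (xketS (![true, true] : Fin 2 → Bool))) (Sum.elim ![a, b, c] ![d, e]) := by
  intro a b c d e
  simp only [H5, Cgate, csign, plusAll, tensP, zketS, xketS, Pi.add_apply, Pi.smul_apply,
    smul_eq_mul, Fin.prod_univ_two, Fintype.card_sum, Fintype.card_fin,
    Sum.elim_inl, Sum.elim_inr, Finset.forall_mem_insert, Finset.mem_singleton, forall_eq,
    funext_iff, Fin.forall_fin_succ, Fin.forall_fin_zero_pi,
    Matrix.cons_val_zero, Matrix.cons_val_one, Matrix.head_cons, Matrix.cons_val_succ, Matrix.cons_val_two, hs_aux]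
  rcases a <;> rcases b <;> rcases c <;> rcases d <;> rcases e <;> norm_num <;> ring

theorem H5_expansion :
    H5 = (((2 * Real.sqrt 2)⁻¹ : ℝ) : ℂ) • (
      tensP (zketS ![false, false, false] + zketS ![false, false, true]
          + zketS ![false, true, false] + zketS ![true, false, false])
        (xketS (![false, false] : Fin 2 → Bool))
      + tensP (zketS ![false, true, true] + zketS ![true, true, false]
          + zketS ![true, false, true] + zketS ![true, true, true])
        (xketS (![true, true] : Fin 2 → Bool))) := by
  funext x
  have hx : x = Sum.elim ![x (Sum.inl 0), x (Sum.inl 1), x (Sum.inl 2)]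
      ![x (Sum.inr 0), x (Sum.inr 1)] := by
    funext i
    rcases i with i | i <;> fin_cases i <;> rfl
  rw [hx]
  exact H5_aux _ _ _ _ _
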